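/- Let c > 0, s a nonnegative integer, and (V_t)_{t≥1} a martingale with respect to a filtration (F_t). Suppose a process (M_t)_{t≥1} satisfies E[M_{t+1} | F_t] = M_t + c t^s V_t for all t ≥ 1, with each M_t and V_t integrable and F_t-measurable. Then there exists a constant vector a = (a_1,…,a_{s+1}) ∈ R^{s+1} such that W_t := M_t + ∑_{i=1}^{s+1} a_i t^i V_t is a martingale with respect to (F_t). -/

import Mathlib

open MeasureTheory ProbabilityTheory Finset

theorem stmt_12 {Ω : Type*} {m0 : MeasurableSpace Ω} (P : Measure Ω) [IsProbabilityMeasure P]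
    (F : Filtration ℕ m0) (c : ℝ) (hc : 0 < c) (s : ℕ)
    (V M : ℕ → Ω → ℝ)
    (hV : Martingale V F P)
    (hMadapted : Adapted F M)
    (hMint : ∀ t, Integrable (M t) P)
    (hMVint : ∀ t, Integrable (fun ω => M t ω * V t ω) P)
    (hrec : ∀ t : ℕ, 1 ≤ t →
      (P[M (t + 1) | F t]) =ᵐ[P] fun ω => M t ω + c * (t : ℝ) ^ s * V t ω) :
    ∃ a : Fin (s + 1) → ℝ, ∀ t : ℕ, 1 ≤ t →
      (P[(fun ω => M (t + 1) ω + (∑ i, a i * ((t : ℝ) + 1) ^ (i.1 + 1)) * V (t + 1) ω)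
          | F t]) =ᵐ[P]
        fun ω => M t ω + (∑ i, a i * (t : ℝ) ^ (i.1 + 1)) * V t ω := by
  -- rational Faulhaber coefficients
  set q : ℕ → ℚ := fun i => bernoulli i * ((s + 1).choose i) / (s + 1) with hqdef
  set a : Fin (s + 1) → ℝ := fun i => -c * ((q (s - i.1) : ℚ) : ℝ) with hadef
  -- Faulhaber over ℚ, reindexed
  have keyQ : ∀ t : ℕ, (∑ j ∈ range (s + 1), q (s - j) * (t : ℚ) ^ (j + 1))
      = ∑ k ∈ range t, (k : ℚ) ^ s := by
    intro t
    rw [sum_range_pow t s,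
      ← Finset.sum_range_reflect
        (fun i => bernoulli i * ((s + 1).choose i) * (t : ℚ) ^ (s + 1 - i) / (s + 1)) (s + 1)]
    refine Finset.sum_congr rfl fun j hj => ?_
    have hj' : j < s + 1 := Finset.mem_range.mp hj
    have h1 : s + 1 - 1 - j = s - j := by omega
    have h2 : s + 1 - (s - j) = j + 1 := by omega
    rw [h1, h2, hqdef]
    ring
  -- the real polynomial p(t) = ∑ a i t^(i+1) equals -c * ∑_{k<t} k^s
  have key : ∀ t : ℕ, (∑ i : Fin (s + 1), a i * (t : ℝ) ^ (i.1 + 1))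
      = -c * ∑ k ∈ range t, (k : ℝ) ^ s := by
    intro t
    have hcast := congrArg (fun x : ℚ => (x : ℝ)) (keyQ t)
    push_cast at hcast
    calc ∑ i : Fin (s + 1), a i * (t : ℝ) ^ (i.1 + 1)
        = ∑ j ∈ range (s + 1), (-c * ((q (s - j) : ℚ) : ℝ)) * (t : ℝ) ^ (j + 1) :=
          Fin.sum_univ_eq_sum_range
            (fun j => (-c * ((q (s - j) : ℚ) : ℝ)) * (t : ℝ) ^ (j + 1)) (s + 1)
      _ = -c * ∑ j ∈ range (s + 1), ((q (s - j) : ℚ) : ℝ) * (t : ℝ) ^ (j + 1) := by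
          rw [Finset.mul_sum]; exact Finset.sum_congr rfl fun j _ => by ring
      _ = -c * ∑ k ∈ range t, (k : ℝ) ^ s := by rw [hcast]
  -- telescoping step
  have step : ∀ t : ℕ, (∑ i : Fin (s + 1), a i * ((t : ℝ) + 1) ^ (i.1 + 1)) + c * (t : ℝ) ^ s
      = ∑ i : Fin (s + 1), a i * (t : ℝ) ^ (i.1 + 1) := by
    intro t
    have h1 := key (t + 1)
    have h2 := key t
    rw [Finset.sum_range_succ] at h1
    push_cast at h1
    rw [h1, h2]
    ring
  refine ⟨a, fun t ht => ?_⟩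
  have hVi : Integrable ((∑ i : Fin (s + 1), a i * ((t : ℝ) + 1) ^ (i.1 + 1)) • V (t + 1)) P :=
    (hV.integrable (t + 1)).smul _
  have h2 : P[(fun ω => M (t + 1) ω
        + (∑ i : Fin (s + 1), a i * ((t : ℝ) + 1) ^ (i.1 + 1)) * V (t + 1) ω) | F t]
      =ᵐ[P] P[M (t + 1) | F t]
        + (∑ i : Fin (s + 1), a i * ((t : ℝ) + 1) ^ (i.1 + 1)) • P[V (t + 1) | F t] := by
    refine (condExp_add (hMint (t + 1)) hVi _).trans ?_
    exact Filter.EventuallyEq.add (Filter.EventuallyEq.refl _ _)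
      (condExp_smul _ (V (t + 1)) _)
  have h3 := hrec t ht
  have h4 := hV.condExp_ae_eq (Nat.le_succ t)
  filter_upwards [h2, h3, h4] with ω e2 e3 e4
  rw [e2, Pi.add_apply, Pi.smul_apply, e3, e4, smul_eq_mul]
  have hstep := step t
  linear_combination (V t ω) * hstep
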